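/- Let x : ℝ → ℝ be a continuously differentiable T-periodic function and t₀, t ∈ [0, T]. Then x(t) - x(t₀) ≥ -(√T / 2) (∫₀ᵀ (ẋ(s))² ds)^{1/2}. -/

import Mathlib

open MeasureTheory intervalIntegral

theorem periodic_variation_bound (T : ℝ) (hT : 0 < T)
    (x : ℝ → ℝ) (hx : ContDiff ℝ 1 x) (hper : Function.Periodic x T)
    (t₀ t : ℝ) (ht₀ : t₀ ∈ Set.Icc 0 T) (ht : t ∈ Set.Icc 0 T) :
    x t - x t₀ ≥ -(Real.sqrt T / 2) * Real.sqrt (∫ s in (0:ℝ)..T, (deriv x s)^2) := by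
  set f := deriv x with hfdef
  have hf : Continuous f := hx.continuous_deriv le_rfl
  have hdiff : Differentiable ℝ x := hx.differentiable one_ne_zero
  have hint : ∀ a b : ℝ, ∫ s in a..b, f s = x b - x a := fun a b =>
    integral_deriv_eq_sub (fun s _ => hdiff s)
      (hf.intervalIntegrable a b)
  have hzero : ∫ s in (0:ℝ)..T, f s = 0 := by
    rw [hint]
    have := hper 0
    simp only [zero_add] at this
    rw [this]; ring
  set I := ∫ s in (0:ℝ)..T, |f s| with hI
  -- Cauchy-Schwarz: I ≤ √T * √(∫ f²)
  have habs : I ≤ Real.sqrt T * Real.sqrt (∫ s in (0:ℝ)..T, (f s)^2) := by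
    set μ := volume.restrict (Set.Ioc (0:ℝ) T) with hμ
    haveI : IsFiniteMeasure μ := by
      constructor
      rw [hμ, Measure.restrict_apply_univ, Real.volume_Ioc]
      exact ENNReal.ofReal_lt_top
    have hpq : Real.HolderConjugate 2 2 := Real.HolderConjugate.two_two
    obtain ⟨C, hC⟩ := isCompact_Icc.exists_bound_of_continuousOn
      (f := fun s : ℝ => |f s|) (hf.abs.continuousOn (s := Set.Icc 0 T))
    have hmemf : MemLp (fun s => |f s|) (ENNReal.ofReal 2) μ := by
      refine MemLp.of_bound (hf.abs.aestronglyMeasurable) C ?_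
      filter_upwards [ae_restrict_mem measurableSet_Ioc] with s hs
      simpa [Real.norm_eq_abs, abs_abs] using hC s (Set.Ioc_subset_Icc_self hs)
    have hmemg : MemLp (fun _ : ℝ => (1:ℝ)) (ENNReal.ofReal 2) μ := memLp_const 1
    have key := integral_mul_le_Lp_mul_Lq_of_nonneg hpq
      (Filter.Eventually.of_forall fun s => abs_nonneg (f s))
      (Filter.Eventually.of_forall fun _ => zero_le_one) hmemf hmemg
    simp only [mul_one, Real.rpow_two, one_pow] at key
    have e1 : ∫ s, |f s| ∂μ = I := by
      rw [hI, intervalIntegral.integral_of_le hT.le]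
    have e2 : ∫ s, |f s| ^ (2:ℕ) ∂μ = ∫ s in (0:ℝ)..T, (f s)^2 := by
      rw [intervalIntegral.integral_of_le hT.le]
      congr 1
      funext s
      rw [sq_abs]
    have e3 : ∫ s, (1:ℝ) ∂μ = T := by
      simp [hμ, Real.volume_Ioc, ENNReal.toReal_ofReal hT.le, hT.le]
    rw [e1, e2, e3] at key
    calc I ≤ (∫ s in (0:ℝ)..T, (f s)^2) ^ (1/2 : ℝ) * T ^ (1/2 : ℝ) := key
      _ = Real.sqrt T * Real.sqrt (∫ s in (0:ℝ)..T, (f s)^2) := by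
          rw [← Real.sqrt_eq_rpow, ← Real.sqrt_eq_rpow, mul_comm]
  have hIabs : IntervalIntegrable (fun s => |f s|) volume 0 T := (hf.abs.intervalIntegrable 0 T)
  have hfi : IntervalIntegrable f volume 0 T := hf.intervalIntegrable 0 T
  -- ∫ min(f,0) = -I/2, ∫ max(f,0) = I/2
  have hmin : ∫ s in (0:ℝ)..T, min (f s) 0 = -(I/2) := by
    have : (fun s => min (f s) 0) = fun s => (f s - |f s|)/2 := by
      funext s; rcases le_total (f s) 0 with h | h
      · rw [min_eq_left h, abs_of_nonpos h]; ring
      · rw [min_eq_right h, abs_of_nonneg h]; ring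
    rw [this, intervalIntegral.integral_div, intervalIntegral.integral_sub hfi hIabs, hzero, ← hI]
    ring
  have hmax : ∫ s in (0:ℝ)..T, max (f s) 0 = I/2 := by
    have : (fun s => max (f s) 0) = fun s => (f s + |f s|)/2 := by
      funext s; rcases le_total (f s) 0 with h | h
      · rw [max_eq_right h, abs_of_nonpos h]; ring
      · rw [max_eq_left h, abs_of_nonneg h]; ring
    rw [this, intervalIntegral.integral_div, intervalIntegral.integral_add hfi hIabs, hzero, ← hI]
    ring
  have hmin_i : IntervalIntegrable (fun s => min (f s) 0) volume 0 T :=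
    ((hf.min continuous_const).intervalIntegrable 0 T)
  have hmax_i : IntervalIntegrable (fun s => max (f s) 0) volume 0 T :=
    ((hf.max continuous_const).intervalIntegrable 0 T)
  -- main bound : x t - x t₀ ≥ -(I/2)
  have hmain : x t - x t₀ ≥ -(I/2) := by
    rcases le_total t₀ t with hle | hle
    · have h1 : ∫ s in t₀..t, min (f s) 0 ≤ ∫ s in t₀..t, f s :=
        intervalIntegral.integral_mono_on hle
          (hmin_i.mono_set (Set.uIcc_subset_uIcc (by rw [Set.uIcc_of_le hT.le]; exact ht₀)
            (by rw [Set.uIcc_of_le hT.le]; exact ht)))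
          (hfi.mono_set (Set.uIcc_subset_uIcc (by rw [Set.uIcc_of_le hT.le]; exact ht₀)
            (by rw [Set.uIcc_of_le hT.le]; exact ht)))
          (fun s _ => min_le_left _ _)
      have h2 : ∫ s in (0:ℝ)..T, min (f s) 0 ≤ ∫ s in t₀..t, min (f s) 0 := by
        have := intervalIntegral.integral_mono_interval (f := fun s => max (-f s) 0)
          (μ := volume) ht₀.1 hle ht.2
          (Filter.Eventually.of_forall fun s => le_max_right _ _)
          ((hf.neg.max continuous_const).intervalIntegrable 0 T)
        have eq1 : ∀ a b : ℝ, ∫ s in a..b, max (-f s) 0 = -∫ s in a..b, min (f s) 0 := by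
          intro a b
          rw [← intervalIntegral.integral_neg]
          congr 1; funext s
          rcases le_total (f s) 0 with h | h
          · rw [max_eq_left (neg_nonneg.mpr h), min_eq_left h]
          · rw [max_eq_right (neg_nonpos.mpr h), min_eq_right h]; ring
        rw [eq1, eq1] at this
        linarith
      rw [hint t₀ t] at h1
      rw [hmin] at h2
      linarith
    · have h1 : ∫ s in t..t₀, f s ≤ ∫ s in t..t₀, max (f s) 0 :=
        intervalIntegral.integral_mono_on hle
          (hfi.mono_set (Set.uIcc_subset_uIcc (by rw [Set.uIcc_of_le hT.le]; exact ht)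
            (by rw [Set.uIcc_of_le hT.le]; exact ht₀)))
          (hmax_i.mono_set (Set.uIcc_subset_uIcc (by rw [Set.uIcc_of_le hT.le]; exact ht)
            (by rw [Set.uIcc_of_le hT.le]; exact ht₀)))
          (fun s _ => le_max_left _ _)
      have h2 : ∫ s in t..t₀, max (f s) 0 ≤ ∫ s in (0:ℝ)..T, max (f s) 0 :=
        intervalIntegral.integral_mono_interval ht.1 hle ht₀.2
          (Filter.Eventually.of_forall fun s => le_max_right _ _) hmax_i
      rw [hint t t₀] at h1
      rw [hmax] at h2
      linarith
  calc x t - x t₀ ≥ -(I/2) := hmain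
    _ ≥ -(Real.sqrt T * Real.sqrt (∫ s in (0:ℝ)..T, (f s)^2) / 2) := by linarith
    _ = -(Real.sqrt T / 2) * Real.sqrt (∫ s in (0:ℝ)..T, (deriv x s)^2) := by
        rw [hfdef]; ring
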